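/- Under the majorant condition, for any x with ‖x − x*‖ < κ, the linearization error satisfies β‖F(x*) − F(x) − F'(x)(x* − x)‖ ≤ f(0) − f(‖x−x*‖) − f'(‖x−x*‖)(0 − ‖x−x*‖), i.e. β‖E_F(x,x*)‖ ≤ e_f(‖x−x*‖, 0). -/

import Mathlib

/-- Moore–Penrose inverse of an injective closed-range operator: A† = (A*A)⁻¹ A*. -/
noncomputable def pinv {X Y : Type*} [NormedAddCommGroup X] [InnerProductSpace ℝ X]
    [CompleteSpace X] [NormedAddCommGroup Y] [InnerProductSpace ℝ Y] [CompleteSpace Y]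
    (A : X →L[ℝ] Y) : Y →L[ℝ] X :=
  (Ring.inverse ((ContinuousLinearMap.adjoint A).comp A)).comp (ContinuousLinearMap.adjoint A)

theorem stmt10
    {X Y : Type*} [NormedAddCommGroup X] [InnerProductSpace ℝ X] [CompleteSpace X]
    [NormedAddCommGroup Y] [InnerProductSpace ℝ Y] [CompleteSpace Y]
    (Ω : Set X) (hΩ : IsOpen Ω) (F : X → Y) (Fp : X → X →L[ℝ] Y)
    (hF : ∀ x ∈ Ω, HasFDerivAt F (Fp x) x)
    (hclosed : ∀ x ∈ Ω, IsClosed (Set.range ((Fp x) : X → Y)))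
    (xs : X) (hxs : xs ∈ Ω) (hFxs : F xs = 0) (hinj : Function.Injective ((Fp xs) : X → Y))
    (R : ℝ) (hR : 0 < R)
    (β κ : ℝ) (hβ : β = ‖pinv (Fp xs)‖)
    (hκ : κ = sSup {t ∈ Set.Ico 0 R | Metric.ball xs t ⊆ Ω})
    (f fp : ℝ → ℝ)
    (hderiv : ∀ t ∈ Set.Ico (0:ℝ) R, HasDerivWithinAt f (fp t) (Set.Ico 0 R) t)
    (hcont : ContinuousOn fp (Set.Ico 0 R))
    (hmaj : ∀ τ ∈ Set.Icc (0:ℝ) 1, ∀ x ∈ Metric.ball xs κ,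
      β * ‖Fp x - Fp (xs + τ • (x - xs))‖ ≤ fp ‖x - xs‖ - fp (τ * ‖x - xs‖))
    (hf0 : f 0 = 0) (hfp0 : fp 0 = -1) (hmono : StrictMonoOn fp (Set.Ico 0 R))
    (x : X) (hx : ‖x - xs‖ < κ) :
    β * ‖F xs - (F x + Fp x (xs - x))‖ ≤
      f 0 - (f ‖x - xs‖ + fp ‖x - xs‖ * (0 - ‖x - xs‖)) := by
  set r : ℝ := ‖x - xs‖ with hr
  have hr0 : 0 ≤ r := norm_nonneg _
  -- κ ≤ R
  have hκR : κ ≤ R := by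
    rw [hκ]
    apply Real.sSup_le (fun t ht => le_of_lt ht.1.2) hR.le
  have hrR : r < R := lt_of_lt_of_le hx hκR
  -- membership in Ω for points within κ of xs
  have hmem : ∀ z : X, ‖z - xs‖ < κ → z ∈ Ω := by
    intro z hz
    have hne : ({t ∈ Set.Ico 0 R | Metric.ball xs t ⊆ Ω}).Nonempty := by
      refine ⟨0, ⟨le_refl 0, hR⟩, ?_⟩
      simp [Metric.ball_zero]
    have : ‖z - xs‖ < sSup {t ∈ Set.Ico 0 R | Metric.ball xs t ⊆ Ω} := by rwa [← hκ]
    obtain ⟨t, ht, hlt⟩ := exists_lt_of_lt_csSup hne this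
    exact ht.2 (by simpa [Metric.mem_ball, dist_eq_norm] using hlt)
  -- points on the segment
  have hy : ∀ τ : ℝ, τ ∈ Set.Icc (0:ℝ) 1 → (xs + τ • (x - xs)) ∈ Ω := by
    intro τ hτ
    apply hmem
    have : ‖xs + τ • (x - xs) - xs‖ = τ * r := by
      rw [add_sub_cancel_left, norm_smul, Real.norm_eq_abs, abs_of_nonneg hτ.1]
    rw [this]
    calc τ * r ≤ 1 * r := by nlinarith [hτ.2]
    _ = r := one_mul r
    _ < κ := hx
  have hβ0 : 0 ≤ β := hβ ▸ norm_nonneg _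
  -- the function h and bound B
  set v : X := x - xs with hv
  set h : ℝ → Y := fun τ => β • (F (xs + τ • v) - F xs - τ • (Fp x v)) with hh
  set h' : ℝ → Y := fun τ => β • ((Fp (xs + τ • v)) v - Fp x v) with hh'
  set B : ℝ → ℝ := fun τ => fp r * r * τ - f (τ * r) + f 0 with hB
  set B' : ℝ → ℝ := fun τ => fp r * r - fp (τ * r) * r with hB'
  have hderivh : ∀ τ ∈ Set.Icc (0:ℝ) 1, HasDerivAt h (h' τ) τ := by
    intro τ hτ
    have hyd : HasDerivAt (fun τ : ℝ => xs + τ • v) v τ := by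
      simpa using ((hasDerivAt_id τ).smul_const v).const_add xs
    have hFc : HasDerivAt (fun τ : ℝ => F (xs + τ • v)) ((Fp (xs + τ • v)) v) τ :=
      (hF _ (hy τ hτ)).comp_hasDerivAt τ hyd
    have h2 : HasDerivAt (fun τ : ℝ => F (xs + τ • v) - F xs - τ • (Fp x v))
        ((Fp (xs + τ • v)) v - Fp x v) τ := by
      simpa [Pi.sub_def] using (hFc.sub_const (F xs)).sub ((hasDerivAt_id τ).smul_const (Fp x v))
    exact h2.const_smul β
  have hmaps : ∀ τ ∈ Set.Icc (0:ℝ) 1, τ * r ∈ Set.Ico (0:ℝ) R := by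
    intro τ hτ
    constructor
    · exact mul_nonneg hτ.1 hr0
    · calc τ * r ≤ 1 * r := by nlinarith [hτ.2]
      _ = r := one_mul r
      _ < R := hrR
  have hderivB : ∀ τ ∈ Set.Icc (0:ℝ) 1, HasDerivWithinAt B (B' τ) (Set.Icc 0 1) τ := by
    intro τ hτ
    have hmul : HasDerivWithinAt (fun τ : ℝ => τ * r) r (Set.Icc 0 1) τ := by
      simpa using ((hasDerivAt_id τ).mul_const r).hasDerivWithinAt
    have hfc : HasDerivWithinAt (fun τ : ℝ => f (τ * r)) (fp (τ * r) * r) (Set.Icc 0 1) τ :=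
      (hderiv _ (hmaps τ hτ)).comp τ hmul (fun s hs => hmaps s hs)
    have h1 : HasDerivWithinAt (fun τ : ℝ => fp r * r * τ) (fp r * r) (Set.Icc 0 1) τ := by
      simpa using ((hasDerivAt_id τ).const_mul (fp r * r)).hasDerivWithinAt
    simpa [hB, hB'] using (h1.sub hfc).add_const (f 0)
  have hfcont : ContinuousOn h (Set.Icc 0 1) :=
    fun τ hτ => (hderivh τ hτ).continuousAt.continuousWithinAt
  have hf' : ∀ τ ∈ Set.Ico (0:ℝ) 1, HasDerivWithinAt h (h' τ) (Set.Ici τ) τ :=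
    fun τ hτ => (hderivh τ (Set.mem_Icc_of_Ico hτ)).hasDerivWithinAt
  have ha : ‖h 0‖ ≤ B 0 := by simp [hh, hB]
  have hBcont : ContinuousOn B (Set.Icc 0 1) :=
    fun τ hτ => (hderivB τ hτ).continuousWithinAt
  have hB'Ici : ∀ τ ∈ Set.Ico (0:ℝ) 1, HasDerivWithinAt B (B' τ) (Set.Ici τ) τ := by
    intro τ hτ
    refine (hderivB τ (Set.mem_Icc_of_Ico hτ)).mono_of_mem_nhdsWithin ?_
    exact Icc_mem_nhdsGE_of_mem ⟨hτ.1, hτ.2⟩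
  have bound : ∀ τ ∈ Set.Ico (0:ℝ) 1, ‖h' τ‖ ≤ B' τ := by
    intro τ hτ
    have hτ' : τ ∈ Set.Icc (0:ℝ) 1 := Set.mem_Icc_of_Ico hτ
    have hxball : x ∈ Metric.ball xs κ := by
      simpa [Metric.mem_ball, dist_eq_norm] using hx
    have hm := hmaj τ hτ' x hxball
    have hnorm : ‖h' τ‖ = β * ‖(Fp (xs + τ • v)) v - Fp x v‖ := by
      rw [hh', norm_smul, Real.norm_eq_abs, abs_of_nonneg hβ0]
    have hop : ‖(Fp (xs + τ • v)) v - Fp x v‖ ≤ ‖Fp x - Fp (xs + τ • v)‖ * ‖v‖ := by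
      have : (Fp (xs + τ • v)) v - Fp x v = -((Fp x - Fp (xs + τ • v)) v) := by
        simp [ContinuousLinearMap.sub_apply]
      rw [this, norm_neg]
      exact (Fp x - Fp (xs + τ • v)).le_opNorm v
    calc ‖h' τ‖ = β * ‖(Fp (xs + τ • v)) v - Fp x v‖ := hnorm
      _ ≤ β * (‖Fp x - Fp (xs + τ • v)‖ * ‖v‖) := mul_le_mul_of_nonneg_left hop hβ0
      _ = (β * ‖Fp x - Fp (xs + τ • v)‖) * r := by rw [hv, ← hr]; ring
      _ ≤ (fp r - fp (τ * r)) * r := mul_le_mul_of_nonneg_right hm hr0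
      _ = B' τ := by rw [hB']; ring
  have key : ∀ τ ∈ Set.Icc (0:ℝ) 1, ‖h τ‖ ≤ B τ :=
    image_norm_le_of_norm_deriv_right_le_deriv_boundary' hfcont hf' ha hBcont hB'Ici bound
  have h1 := key 1 ⟨zero_le_one, le_refl 1⟩
  have hx1 : xs + v = x := by rw [hv]; abel
  have hnorm1 : ‖h 1‖ = β * ‖F xs - (F x + Fp x (xs - x))‖ := by
    rw [hh]
    simp only [one_smul, hx1]
    rw [norm_smul, Real.norm_eq_abs, abs_of_nonneg hβ0, ← norm_neg (F x - F xs - (Fp x) v)]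
    congr 1
    have : (Fp x) (xs - x) = -((Fp x) v) := by
      rw [hv, ← map_neg]; congr 1; abel
    rw [this]
    abel
  have hB1 : B 1 = f 0 - (f r + fp r * (0 - r)) := by
    rw [hB]; simp; ring
  rw [← hnorm1, ← hB1]
  exact h1
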